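/- Let k be a field and m, s, t natural numbers. In the polynomial ring R = k[x_0,…,x_m, y_0,…,y_m], let I be the ideal generated by the binomials x_i·y_j − x_j·y_i for all 0 ≤ i, j ≤ m. Then the k-dimension of the bidegree-(s,t) graded piece of R/I equals the binomial coefficient C(s+t+m, m). -/

import Mathlib

open MvPolynomial

/-- The k-subspace of the polynomial ring `k[x_σ, y_τ]` spanned by the bihomogeneous
polynomials of bidegree `(s, t)`, where each `x` variable has bidegree `(1,0)` and each
`y` variable has bidegree `(0,1)`. -/
noncomputable def bidegPiece (k : Type*) [Field k] (σ τ : Type*) [Fintype σ] [Fintype τ]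
    (s t : ℕ) : Submodule k (MvPolynomial (σ ⊕ τ) k) :=
  Submodule.span k {P : MvPolynomial (σ ⊕ τ) k |
    ∀ d ∈ P.support, (∑ i : σ, d (Sum.inl i)) = s ∧ (∑ j : τ, d (Sum.inr j)) = t}

namespace DiagAux

variable {k : Type*} [Field k] {σ : Type*} [Fintype σ] [DecidableEq σ]

lemma sum_univ_degree (d : σ →₀ ℕ) : ∑ i : σ, d i = d.degree :=
  (Finset.sum_subset (Finset.subset_univ _) (fun x _ hx => by
    simpa [Finsupp.notMem_support_iff] using hx)).symm

lemma sum_single_one (i : σ) : ∑ x : σ, Finsupp.single i (1 : ℕ) x = 1 := by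
  simp [Finsupp.single_apply]

lemma eq_of_le_of_sum {a a' : σ →₀ ℕ} (h : ∀ i, a i ≤ a' i)
    (hs : ∑ i, a i = ∑ i, a' i) : a = a' := by
  ext i
  by_contra hne
  have hlt : a i < a' i := lt_of_le_of_ne (h i) hne
  have := Finset.sum_lt_sum (fun x _ => h x) ⟨i, Finset.mem_univ i, hlt⟩
  omega

lemma exists_split (c : σ →₀ ℕ) : ∀ s : ℕ, s ≤ ∑ i, c i →
    ∃ a : σ →₀ ℕ, (∀ i, a i ≤ c i) ∧ ∑ i, a i = s := by
  intro s
  induction s with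
  | zero => exact fun _ => ⟨0, fun i => Nat.zero_le _, by simp⟩
  | succ s ih =>
    intro hs
    obtain ⟨a, hac, hsum⟩ := ih (Nat.le_of_succ_le hs)
    have hlt : ∃ i, a i < c i := by
      by_contra h'
      push_neg at h'
      have : a = c := eq_of_le_of_sum hac (le_antisymm (Finset.sum_le_sum fun x _ => hac x)
        (Finset.sum_le_sum fun x _ => h' x))
      subst this
      omega
    obtain ⟨i, hi⟩ := hlt
    refine ⟨a + Finsupp.single i 1, fun x => ?_, ?_⟩
    · rcases eq_or_ne x i with rfl | hx
      · simp [Finsupp.single_apply]; omega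
      · simp [Finsupp.single_apply, hx, Ne.symm hx]
        exact hac x
    · rw [Finset.sum_congr rfl (fun x _ => Finsupp.add_apply a (Finsupp.single i 1) x),
        Finset.sum_add_distrib, hsum, sum_single_one]

set_option maxHeartbeats 1000000 in
lemma mono_sub_mem (N : ℕ) : ∀ (a b a' b' : σ →₀ ℕ),
    (∑ i : σ, ((a i - a' i) + (a' i - a i))) ≤ N → a + b = a' + b' →
    (∑ i, a i) = (∑ i, a' i) →
    monomial (Finsupp.sumElim a b) (1 : k) - monomial (Finsupp.sumElim a' b') 1 ∈
      Ideal.span {f : MvPolynomial (σ ⊕ σ) k | ∃ i j : σ,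
        f = X (Sum.inl i) * X (Sum.inr j) - X (Sum.inl j) * X (Sum.inr i)} := by
  induction N with
  | zero =>
    intro a b a' b' hN hab hs
    have ha : a = a' := by
      ext i
      have := Finset.sum_eq_zero_iff.mp (Nat.le_zero.mp hN) i (Finset.mem_univ i)
      omega
    subst ha
    have hb : b = b' := by
      ext i
      have := DFunLike.congr_fun hab i
      simp only [Finsupp.add_apply] at this
      omega
    subst hb
    simp
  | succ N IH =>
    intro a b a' b' hN hab hs
    by_cases hA : a = a'
    · subst hA
      have hb : b = b' := by
        ext i
        have := DFunLike.congr_fun hab i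
        simp only [Finsupp.add_apply] at this
        omega
      subst hb; simp
    · have habx : ∀ x, a x + b x = a' x + b' x := fun x => by
        have := DFunLike.congr_fun hab x
        simpa only [Finsupp.add_apply] using this
      obtain ⟨i, hi⟩ : ∃ i, a' i < a i := by
        by_contra h'
        push_neg at h'
        exact hA (eq_of_le_of_sum h' hs)
      obtain ⟨j, hj⟩ : ∃ j, a j < a' j := by
        by_contra h'
        push_neg at h'
        exact hA (eq_of_le_of_sum h' hs.symm).symm
      have hij : i ≠ j := fun h => by subst h; omega
      have hai : 1 ≤ a i := by omega
      have hbj : 1 ≤ b j := by have := habx j; omega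
      set a₂ : σ →₀ ℕ := a - Finsupp.single i 1 + Finsupp.single j 1 with ha₂def
      set b₂ : σ →₀ ℕ := b + Finsupp.single i 1 - Finsupp.single j 1 with hb₂def
      have ha₂ : ∀ x, a₂ x = a x - (if i = x then 1 else 0) + (if j = x then 1 else 0) := by
        intro x
        simp [ha₂def, Finsupp.tsub_apply, Finsupp.add_apply, Finsupp.single_apply]
      have hb₂ : ∀ x, b₂ x = b x + (if i = x then 1 else 0) - (if j = x then 1 else 0) := by
        intro x
        simp [hb₂def, Finsupp.tsub_apply, Finsupp.add_apply, Finsupp.single_apply]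
      set u : σ ⊕ σ →₀ ℕ := Finsupp.sumElim (a - Finsupp.single i 1) (b - Finsupp.single j 1)
        with hudef
      have e1 : Finsupp.sumElim a b =
          u + (Finsupp.single (Sum.inl i) 1 + Finsupp.single (Sum.inr j) 1) := by
        ext x
        cases x with
        | inl x =>
          simp only [Finsupp.add_apply, Finsupp.sumElim_inl, Finsupp.tsub_apply,
            Finsupp.single_apply, hudef]
          rcases eq_or_ne i x with rfl | hx
          · simp; omega
          · simp [hx, fun h : Sum.inl i = Sum.inl x => hx (Sum.inl_injective h)]
        | inr x =>
          simp only [Finsupp.add_apply, Finsupp.sumElim_inr, Finsupp.tsub_apply,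
            Finsupp.single_apply, hudef]
          rcases eq_or_ne j x with rfl | hx
          · simp; omega
          · simp [hx, fun h : Sum.inr j = Sum.inr x => hx (Sum.inr_injective h)]
      have e2 : Finsupp.sumElim a₂ b₂ =
          u + (Finsupp.single (Sum.inl j) 1 + Finsupp.single (Sum.inr i) 1) := by
        ext x
        cases x with
        | inl x =>
          simp only [Finsupp.add_apply, Finsupp.sumElim_inl, Finsupp.tsub_apply,
            Finsupp.single_apply, hudef, ha₂ x]
          rcases eq_or_ne j x with rfl | hx
          · simp
          · simp [hx, fun h : Sum.inl j = Sum.inl x => hx (Sum.inl_injective h)]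
        | inr x =>
          simp only [Finsupp.add_apply, Finsupp.sumElim_inr, Finsupp.tsub_apply,
            Finsupp.single_apply, hudef, hb₂ x]
          rcases eq_or_ne i x with rfl | hx
          · simp [Ne.symm hij]
          · rcases eq_or_ne j x with rfl | hx'
            · simp [hx, fun h : Sum.inr i = Sum.inr j => hx (Sum.inr_injective h)]
            · simp [hx, hx', fun h : Sum.inr i = Sum.inr x => hx (Sum.inr_injective h),
                fun h : Sum.inr j = Sum.inr x => hx' (Sum.inr_injective h)]
      have key1 : monomial (Finsupp.sumElim a b) (1 : k) - monomial (Finsupp.sumElim a₂ b₂) 1 =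
          monomial u 1 * (X (Sum.inl i) * X (Sum.inr j) - X (Sum.inl j) * X (Sum.inr i)) := by
        rw [mul_sub, X, X, X, X, monomial_mul, monomial_mul, monomial_mul, monomial_mul,
          one_mul, one_mul, e1, e2]
      have mem1 : monomial (Finsupp.sumElim a b) (1 : k) - monomial (Finsupp.sumElim a₂ b₂) 1 ∈
          Ideal.span {f : MvPolynomial (σ ⊕ σ) k | ∃ i j : σ,
            f = X (Sum.inl i) * X (Sum.inr j) - X (Sum.inl j) * X (Sum.inr i)} := by
        rw [key1]
        exact Ideal.mul_mem_left _ _ (Ideal.subset_span ⟨i, j, rfl⟩)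
      have hmeas : (∑ x : σ, ((a₂ x - a' x) + (a' x - a₂ x))) < 
          ∑ x : σ, ((a x - a' x) + (a' x - a x)) := by
        apply Finset.sum_lt_sum
        · intro x _
          rw [ha₂ x]
          rcases eq_or_ne i x with rfl | hx
          · simp [Ne.symm hij]
            omega
          · rcases eq_or_ne j x with rfl | hx'
            · simp [hx]; omega
            · simp [hx, hx']
        · refine ⟨i, Finset.mem_univ i, ?_⟩
          rw [ha₂ i]
          simp [hij, Ne.symm hij]
          omega
      have hab₂ : a₂ + b₂ = a' + b' := by
        rw [← hab]
        ext x
        simp only [Finsupp.add_apply, ha₂ x, hb₂ x]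
        rcases eq_or_ne i x with rfl | hx
        · simp [Ne.symm hij]; omega
        · rcases eq_or_ne j x with rfl | hx'
          · simp [hx]; omega
          · simp [hx, hx']
      have hs₂ : (∑ x, a₂ x) = ∑ x, a' x := by
        have hkey : a₂ + Finsupp.single i 1 = a + Finsupp.single j 1 := by
          ext x
          simp only [Finsupp.add_apply, ha₂ x, Finsupp.single_apply]
          rcases eq_or_ne i x with rfl | hx
          · simp [Ne.symm hij]; omega
          · simp [hx]
        have h1 := congrArg (fun f : σ →₀ ℕ => ∑ x : σ, f x) hkey
        simp only [Finsupp.add_apply] at h1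
        rw [Finset.sum_add_distrib, Finset.sum_add_distrib, sum_single_one, sum_single_one] at h1
        omega
      have mem2 := IH a₂ b₂ a' b' (by omega) hab₂ hs₂
      have : monomial (Finsupp.sumElim a b) (1 : k) - monomial (Finsupp.sumElim a' b') 1 =
          (monomial (Finsupp.sumElim a b) (1 : k) - monomial (Finsupp.sumElim a₂ b₂) 1) +
          (monomial (Finsupp.sumElim a₂ b₂) (1 : k) - monomial (Finsupp.sumElim a' b') 1) := by
        ring
      rw [this]
      exact add_mem mem1 mem2

lemma mapDomain_elim_sumElim (a b : σ →₀ ℕ) :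
    Finsupp.mapDomain (Sum.elim id id) (Finsupp.sumElim a b) = a + b := by
  have h1 : Finsupp.sumElim a b =
      Finsupp.mapDomain Sum.inl a + Finsupp.mapDomain Sum.inr b := by
    ext x
    cases x with
    | inl x =>
      simp [Finsupp.mapDomain_apply Sum.inl_injective,
        Finsupp.mapDomain_notin_range _ _ (by simp : Sum.inl x ∉ Set.range Sum.inr)]
    | inr x =>
      simp [Finsupp.mapDomain_apply Sum.inr_injective,
        Finsupp.mapDomain_notin_range _ _ (by simp : Sum.inr x ∉ Set.range Sum.inl)]
  rw [h1, Finsupp.mapDomain_add, ← Finsupp.mapDomain_comp, ← Finsupp.mapDomain_comp]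
  simp only [Function.comp_def, Sum.elim_inl, Sum.elim_inr, id_eq]
  rw [show (fun x : σ => x) = id from rfl]
  simp [Finsupp.mapDomain_id]

lemma sumElim_fst_snd (d : (σ ⊕ σ) →₀ ℕ) :
    Finsupp.sumElim (Finsupp.sumFinsuppEquivProdFinsupp d).1
      (Finsupp.sumFinsuppEquivProdFinsupp d).2 = d :=
  Finsupp.sumFinsuppEquivProdFinsupp.symm_apply_apply d

end DiagAux

set_option maxHeartbeats 1600000 in
open DiagAux in
/-- In `R = k[x_0,…,x_m, y_0,…,y_m]` with `I` the ideal generated by the binomials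
`x_i y_j - x_j y_i`, the dimension of the bidegree `(s,t)` piece of `R/I` is
`(s+t+m).choose m`. -/
theorem dim_bideg_piece_diagonal (k : Type*) [Field k] (m s t : ℕ)
    (I : Ideal (MvPolynomial (Fin (m + 1) ⊕ Fin (m + 1)) k))
    (hI : I = Ideal.span {f | ∃ i j : Fin (m + 1),
      f = X (Sum.inl i) * X (Sum.inr j) - X (Sum.inl j) * X (Sum.inr i)}) :
    Module.finrank k ((bidegPiece k (Fin (m + 1)) (Fin (m + 1)) s t).map
      (Ideal.Quotient.mkₐ k I).toLinearMap) = (s + t + m).choose m := by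
  classical
  set e : Fin (m + 1) ⊕ Fin (m + 1) → Fin (m + 1) := Sum.elim id id with he
  set φ : MvPolynomial (Fin (m + 1) ⊕ Fin (m + 1)) k →ₐ[k] MvPolynomial (Fin (m + 1)) k := rename e with hφdef
  -- I is contained in the kernel of φ
  have hIker : ∀ a ∈ I, φ a = 0 := by
    intro a ha
    rw [hI] at ha
    have : a ∈ RingHom.ker φ.toRingHom := by
      refine Ideal.span_le.mpr ?_ ha
      rintro f ⟨i, j, rfl⟩
      simp only [SetLike.mem_coe, RingHom.mem_ker, AlgHom.toRingHom_eq_coe,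
        RingHom.coe_coe, map_sub, map_mul, hφdef, rename_X]
      simp only [he, Sum.elim_inl, Sum.elim_inr, id_eq]
      ring
    simpa [RingHom.mem_ker] using this
  set φ' := Ideal.Quotient.liftₐ I φ hIker with hφ'def
  have hcomp : ∀ P, φ' (Ideal.Quotient.mkₐ k I P) = φ P := fun P =>
    AlgHom.congr_fun (Ideal.Quotient.liftₐ_comp I φ hIker) P
  -- splitting of exponents
  have hsplit : ∀ c : Fin (m + 1) →₀ ℕ, (∑ i, c i) = s + t →
      ∃ p : (Fin (m + 1) →₀ ℕ) × (Fin (m + 1) →₀ ℕ), p.1 + p.2 = c ∧ (∑ i, p.1 i) = s ∧ (∑ i, p.2 i) = t := by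
    intro c hc
    obtain ⟨a, hac, hs'⟩ := exists_split c s (by omega)
    have hadd : a + (c - a) = c := by
      ext x
      simp only [Finsupp.add_apply, Finsupp.tsub_apply]
      have := hac x
      omega
    refine ⟨(a, c - a), hadd, hs', ?_⟩
    have h1 := congrArg (fun f : Fin (m + 1) →₀ ℕ => ∑ x : Fin (m + 1), f x) hadd
    simp only [Finsupp.add_apply] at h1
    rw [Finset.sum_add_distrib] at h1
    show (∑ i : Fin (m + 1), (c - a) i) = t
    omega
  choose! sp hsp1 hsp2 hsp3 using hsplit
  set g : (Fin (m + 1) →₀ ℕ) → ((Fin (m + 1) ⊕ Fin (m + 1)) →₀ ℕ) := fun c => Finsupp.sumElim (sp c).1 (sp c).2 with hgdef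
  set ψ : MvPolynomial (Fin (m + 1)) k →ₗ[k] MvPolynomial (Fin (m + 1) ⊕ Fin (m + 1)) k :=
    (basisMonomials (Fin (m + 1)) k).constr k (fun c => monomial (g c) (1 : k)) with hψdef
  have hψ : ∀ (c : Fin (m + 1) →₀ ℕ) (r : k), ψ (monomial c r) = monomial (g c) r := by
    intro c r
    have h1 : monomial c r = r • ((basisMonomials (Fin (m + 1)) k) c) := by
      rw [coe_basisMonomials]
      simp [smul_monomial]
    rw [h1, map_smul, hψdef, Module.Basis.constr_basis]
    simp [smul_monomial]
  -- key fact about bihomogeneous monomials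
  have hmono : ∀ d : (Fin (m + 1) ⊕ Fin (m + 1)) →₀ ℕ, (∑ i : Fin (m + 1), d (Sum.inl i)) = s →
      (∑ j : Fin (m + 1), d (Sum.inr j)) = t →
      ∀ r : k, monomial d r - ψ (φ (monomial d r)) ∈ I := by
    intro d hds hdt r
    set a := (Finsupp.sumFinsuppEquivProdFinsupp d).1 with hadef
    set b := (Finsupp.sumFinsuppEquivProdFinsupp d).2 with hbdef
    have hd : Finsupp.sumElim a b = d := sumElim_fst_snd d
    have hsa : (∑ i, a i) = s := by
      rw [Finset.sum_congr rfl fun x _ => Finsupp.fst_sumFinsuppEquivProdFinsupp d x]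
      exact hds
    have hsb : (∑ i, b i) = t := by
      rw [Finset.sum_congr rfl fun x _ => Finsupp.snd_sumFinsuppEquivProdFinsupp d x]
      exact hdt
    have hmap : Finsupp.mapDomain e d = a + b := by
      rw [← hd, he, mapDomain_elim_sumElim]
    have hcsum : (∑ i, (a + b) i) = s + t := by
      simp only [Finsupp.add_apply]
      rw [Finset.sum_add_distrib, hsa, hsb]
    have hφm : φ (monomial d r) = monomial (a + b) r := by
      rw [hφdef, rename_monomial, hmap]
    have hmem := mono_sub_mem (k := k)
      (∑ i : Fin (m + 1), ((a i - (sp (a + b)).1 i) + ((sp (a + b)).1 i - a i)))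
      a b (sp (a + b)).1 (sp (a + b)).2 le_rfl
      (by rw [hsp1 _ hcsum]) (by rw [hsa, hsp2 _ hcsum])
    rw [hφm, hψ, ← hd]
    have heq : monomial (Finsupp.sumElim a b) r - monomial (g (a + b)) r =
        C r * (monomial (Finsupp.sumElim a b) (1 : k) - monomial (g (a + b)) 1) := by
      rw [mul_sub]
      simp [C_mul_monomial]
    rw [heq, hI]
    exact Ideal.mul_mem_left _ _ hmem
  -- every element of the bidegree piece is congruent to its symmetrization
  have hC : ∀ P ∈ bidegPiece k (Fin (m + 1)) (Fin (m + 1)) s t, P - ψ (φ P) ∈ I := by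
    have hle : bidegPiece k (Fin (m + 1)) (Fin (m + 1)) s t ≤ Submodule.comap
        (LinearMap.id - ψ ∘ₗ φ.toLinearMap) (I.restrictScalars k) := by
      rw [bidegPiece]
      apply Submodule.span_le.mpr
      intro P hP
      simp only [SetLike.mem_coe, Submodule.mem_comap, LinearMap.sub_apply, LinearMap.id_apply,
        LinearMap.coe_comp, Function.comp_apply, AlgHom.toLinearMap_apply,
        Submodule.restrictScalars_mem]
      have hsum : P - ψ (φ P) =
          ∑ d ∈ P.support, (monomial d (coeff d P) - ψ (φ (monomial d (coeff d P)))) := by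
        rw [Finset.sum_sub_distrib, ← map_sum, ← map_sum, ← as_sum]
      rw [hsum]
      exact Submodule.sum_mem _ fun d hd => hmono d (hP d hd).1 (hP d hd).2 _
    intro P hP
    have := hle hP
    simpa only [Submodule.mem_comap, LinearMap.sub_apply, LinearMap.id_apply,
      LinearMap.coe_comp, Function.comp_apply, AlgHom.toLinearMap_apply,
      Submodule.restrictScalars_mem] using this
  set B := bidegPiece k (Fin (m + 1)) (Fin (m + 1)) s t with hBdef
  set V := B.map (Ideal.Quotient.mkₐ k I).toLinearMap with hVdef
  set f : V →ₗ[k] MvPolynomial (Fin (m + 1)) k := φ'.toLinearMap ∘ₗ V.subtype with hfdef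
  have hinj : Function.Injective f := by
    rw [← LinearMap.ker_eq_bot]
    apply (Submodule.eq_bot_iff _).mpr
    intro x hx
    rw [LinearMap.mem_ker, hfdef] at hx
    simp only [LinearMap.coe_comp, Function.comp_apply, Submodule.coe_subtype,
      AlgHom.toLinearMap_apply] at hx
    obtain ⟨P, hPB, hPx⟩ := Submodule.mem_map.mp x.2
    have hφP : φ P = 0 := by
      rw [← hPx] at hx
      rwa [AlgHom.toLinearMap_apply, hcomp] at hx
    have hPI : P ∈ I := by
      have := hC P hPB
      rwa [hφP, map_zero, sub_zero] at this
    have : (x : MvPolynomial (Fin (m + 1) ⊕ Fin (m + 1)) k ⧸ I) = 0 := by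
      rw [← hPx, AlgHom.toLinearMap_apply, Ideal.Quotient.mkₐ_eq_mk,
        Ideal.Quotient.eq_zero_iff_mem]
      exact hPI
    exact Subtype.ext this
  have hdeg : ∀ d : (Fin (m + 1) ⊕ Fin (m + 1)) →₀ ℕ, (∑ i : Fin (m + 1), d (Sum.inl i)) = s →
      (∑ j : Fin (m + 1), d (Sum.inr j)) = t →
      (Finsupp.mapDomain e d).degree = s + t := by
    intro d hds hdt
    set a := (Finsupp.sumFinsuppEquivProdFinsupp d).1 with hadef
    set b := (Finsupp.sumFinsuppEquivProdFinsupp d).2 with hbdef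
    have hd : Finsupp.sumElim a b = d := sumElim_fst_snd d
    have hsa : (∑ i, a i) = s := by
      rw [Finset.sum_congr rfl fun x _ => Finsupp.fst_sumFinsuppEquivProdFinsupp d x]
      exact hds
    have hsb : (∑ i, b i) = t := by
      rw [Finset.sum_congr rfl fun x _ => Finsupp.snd_sumFinsuppEquivProdFinsupp d x]
      exact hdt
    have hmap : Finsupp.mapDomain e d = a + b := by
      rw [← hd, he, mapDomain_elim_sumElim]
    rw [hmap, ← sum_univ_degree]
    simp only [Finsupp.add_apply]
    rw [Finset.sum_add_distrib, hsa, hsb]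
  have hrange : LinearMap.range f = homogeneousSubmodule (Fin (m + 1)) k (s + t) := by
    have h1 : LinearMap.range f = V.map φ'.toLinearMap := by
      rw [hfdef, LinearMap.range_comp, Submodule.range_subtype]
    have hmaps : φ'.toLinearMap ∘ₗ (Ideal.Quotient.mkₐ k I).toLinearMap = φ.toLinearMap :=
      LinearMap.ext fun P => by
        simp only [LinearMap.coe_comp, Function.comp_apply, AlgHom.toLinearMap_apply]
        exact hcomp P
    have h2 : V.map φ'.toLinearMap = B.map φ.toLinearMap := by
      rw [hVdef, ← Submodule.map_comp, hmaps]
    rw [h1, h2]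
    apply le_antisymm
    · rw [hBdef, bidegPiece, Submodule.map_span, Submodule.span_le]
      rintro Q ⟨P, hP, rfl⟩
      simp only [SetLike.mem_coe, AlgHom.toLinearMap_apply]
      have hPsum : φ P = ∑ d ∈ P.support, φ (monomial d (coeff d P)) := by
        rw [← map_sum, ← as_sum]
      rw [hPsum]
      apply Submodule.sum_mem
      intro d hd
      rw [hφdef, rename_monomial, mem_homogeneousSubmodule]
      exact isHomogeneous_monomial _ (hdeg d (hP d hd).1 (hP d hd).2)
    · intro Q hQ
      have hQh : Q.IsHomogeneous (s + t) := hQ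
      have hQsum : Q = ∑ d ∈ Q.support, monomial d (coeff d Q) := as_sum Q
      rw [hQsum]
      apply Submodule.sum_mem
      intro d hd
      have hdd : (∑ i, d i) = s + t := by
        rw [sum_univ_degree]
        have h1 : Finsupp.weight 1 d = s + t := hQh (MvPolynomial.mem_support_iff.mp hd)
        rw [Finsupp.degree_eq_weight_one]
        exact h1
      refine Submodule.mem_map.mpr ⟨monomial (g d) (coeff d Q), ?_, ?_⟩
      · rw [hBdef, bidegPiece]
        apply Submodule.subset_span
        intro d' hd'
        have hd'eq : d' = g d := Finset.mem_singleton.mp (support_monomial_subset hd')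
        subst hd'eq
        constructor
        · rw [Finset.sum_congr rfl fun x _ =>
            show g d (Sum.inl x) = (sp d).1 x by rw [hgdef]; rfl]
          exact hsp2 d hdd
        · rw [Finset.sum_congr rfl fun x _ =>
            show g d (Sum.inr x) = (sp d).2 x by rw [hgdef]; rfl]
          exact hsp3 d hdd
      · rw [AlgHom.toLinearMap_apply, hφdef, rename_monomial]
        congr 1
        rw [hgdef, he, mapDomain_elim_sumElim, hsp1 d hdd]
  have hW : Module.finrank k (homogeneousSubmodule (Fin (m + 1)) k (s + t)) = (s + t + m).choose m := by
    rw [homogeneousSubmodule_eq_finsupp_supported]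
    have ES : {d : Fin (m + 1) →₀ ℕ // d ∈ {d : Fin (m + 1) →₀ ℕ | Finsupp.degree d = s + t}} ≃
        Sym (Fin (m + 1)) (s + t) := by
      refine Equiv.subtypeEquiv Finsupp.orderIsoMultiset.toEquiv ?_
      intro d
      simp only [Set.mem_setOf_eq]
      have hc : Multiset.card (Finsupp.orderIsoMultiset.toEquiv d) = d.degree := by
        show Multiset.card (Finsupp.toMultiset d) = d.degree
        rw [Finsupp.card_toMultiset]
        rfl
      rw [hc]
    letI : Fintype {d : Fin (m + 1) →₀ ℕ // d ∈ {d : Fin (m + 1) →₀ ℕ | Finsupp.degree d = s + t}} :=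
      Fintype.ofEquiv _ ES.symm
    refine Eq.trans (LinearEquiv.finrank_eq (AddMonoidAlgebra.supportedEquivFinsupp (S := k) (R := k)
      {d : Fin (m + 1) →₀ ℕ | Finsupp.degree d = s + t})) ?_
    rw [Module.finrank_finsupp_self, Fintype.card_congr ES, Sym.card_sym_eq_choose,
      Fintype.card_fin]
    rw [show m + 1 + (s + t) - 1 = s + t + m by omega]
    rw [← Nat.choose_symm (by omega : m ≤ s + t + m)]
    congr 1
    omega
  calc Module.finrank k V = Module.finrank k (LinearMap.range f) :=
        (LinearEquiv.ofInjective f hinj).finrank_eq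
    _ = (s + t + m).choose m := by rw [hrange]; exact hW
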